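/- Let p be a prime number, r ≥ 1 an integer, and M a Noetherian (t−1)-invertible Λ-module. Then the derived Alexander module A_{p^r}(M) = M/(t^{p^r} − 1)M is finite. -/

import Mathlib

open Polynomial

/-- `Λ` is the ring `ℤ[t,t⁻¹]` of Laurent polynomials with integer coefficients. -/
abbrev Λ : Type := LaurentPolynomial ℤ

/-- `tL` is the element `t` of `Λ = ℤ[t,t⁻¹]`. -/
noncomputable def tL : Λ := LaurentPolynomial.T 1

/-- The submodule `(t^n − 1)M` of a `Λ`-module `M`. -/
noncomputable def derivedSub (M : Type) [AddCommGroup M] [Module Λ M] (n : ℕ) :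
    Submodule Λ M :=
  LinearMap.range ((tL ^ n - 1) • (LinearMap.id : M →ₗ[Λ] M))

/-- Freshman's dream modulo `p`: `(t-1)^(p^r) = t^(p^r) - 1 + p·c` in `Λ`. -/
lemma key_identity (p : ℕ) (hp : p.Prime) (r : ℕ) :
    ∃ c : Λ, (tL - 1) ^ (p ^ r) = (tL ^ (p ^ r) - 1) + (p : Λ) * c := by
  have h : (Polynomial.C (p : ℤ)) ∣ ((X - 1) ^ (p ^ r) - (X ^ (p ^ r) - 1) : Polynomial ℤ) := by
    rw [Polynomial.C_dvd_iff_dvd_coeff]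
    intro i
    have h0 : Polynomial.map (Int.castRingHom (ZMod p))
        ((X - 1) ^ (p ^ r) - (X ^ (p ^ r) - 1)) = 0 := by
      haveI : Fact p.Prime := ⟨hp⟩
      simp only [Polynomial.map_sub, Polynomial.map_pow, Polynomial.map_one, Polynomial.map_X]
      rw [sub_pow_char_pow]
      ring
    have h1 := congrArg (fun q => Polynomial.coeff q i) h0
    simp only [Polynomial.coeff_map, Polynomial.coeff_zero, Int.coe_castRingHom] at h1
    exact (ZMod.intCast_zmod_eq_zero_iff_dvd _ p).mp h1
  obtain ⟨d, hd⟩ := h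
  refine ⟨Polynomial.toLaurent d, ?_⟩
  have h2 := congrArg Polynomial.toLaurent hd
  simp only [map_sub, map_pow, map_mul, map_one, Polynomial.toLaurent_X,
    Polynomial.toLaurent_C] at h2
  have hC : (LaurentPolynomial.C ((p : ℕ) : ℤ) : Λ) = ((p : ℕ) : Λ) :=
    map_natCast (LaurentPolynomial.C : ℤ →+* Λ) p
  rw [hC] at h2
  rw [show tL = LaurentPolynomial.T 1 from rfl] at *
  linear_combination h2

/-- For a prime `p` and `r ≥ 1`, the derived Alexander module `A_{p^r}(M) = M/(t^{p^r} − 1)M`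
of a Noetherian (t−1)-invertible Λ-module `M` is finite. -/
theorem derived_alexander_prime_power_finite (M : Type) [AddCommGroup M] [Module Λ M]
    [IsNoetherian Λ M]
    (hM : Function.Bijective (fun v : M => (tL - 1) • v))
    (p r : ℕ) (hp : p.Prime) (hr : 1 ≤ r) :
    Finite (M ⧸ derivedSub M (p ^ r)) := by
  classical
  set n : ℕ := p ^ r with hn
  have hn0 : 0 < n := pow_pos hp.pos r
  set N : Submodule Λ M := derivedSub M n with hN
  set A := M ⧸ N with hA
  -- `t^n - 1` kills `A`
  have hkill : ∀ a : A, (tL ^ n - 1) • a = 0 := by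
    intro a
    obtain ⟨m, rfl⟩ := Submodule.Quotient.mk_surjective N a
    rw [← Submodule.Quotient.mk_smul, Submodule.Quotient.mk_eq_zero]
    exact ⟨m, by simp⟩
  -- `t - 1` acts surjectively on `A`
  have hsurj : ∀ a : A, ∃ b : A, (tL - 1) • b = a := by
    intro a
    obtain ⟨m, rfl⟩ := Submodule.Quotient.mk_surjective N a
    obtain ⟨m', hm'⟩ := hM.2 m
    exact ⟨Submodule.Quotient.mk m', by
      rw [← Submodule.Quotient.mk_smul]; exact congrArg _ hm'⟩
  -- hence `(t-1)^k` acts surjectively on `A`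
  have hsurjk : ∀ (k : ℕ) (a : A), ∃ b : A, (tL - 1) ^ k • b = a := by
    intro k
    induction k with
    | zero => intro a; exact ⟨a, by rw [pow_zero, one_smul]⟩
    | succ k ih =>
      intro a
      obtain ⟨b, hb⟩ := ih a
      obtain ⟨b', hb'⟩ := hsurj b
      exact ⟨b', by rw [pow_succ, mul_smul, hb', hb]⟩
  -- `A = pA`
  have hpA : ∀ a : A, ∃ b : A, (p : ℤ) • b = a := by
    intro a
    obtain ⟨b, hb⟩ := hsurjk n a
    obtain ⟨c, hc⟩ := key_identity p hp r
    rw [← hn] at hc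
    refine ⟨c • b, ?_⟩
    have : (tL - 1) ^ n • b = ((tL ^ n - 1) + (p : Λ) * c) • b := by rw [hc]
    rw [add_smul, hkill b, zero_add, mul_smul] at this
    rw [← hb, this, ← Int.cast_smul_eq_zsmul Λ ((p : ℕ) : ℤ) (c • b)]
    norm_cast
  -- `A` is finitely generated over `Λ`
  have fgtop : (⊤ : Submodule Λ M).FG := IsNoetherian.noetherian ⊤
  have fgA : (⊤ : Submodule Λ A).FG := by
    have hmap := Submodule.FG.map (N.mkQ) fgtop
    rwa [Submodule.map_top, Submodule.range_mkQ] at hmap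
  obtain ⟨s, hs⟩ := fgA
  -- `T n` acts trivially on `A`
  have hTnat : ∀ a : A, (LaurentPolynomial.T (n : ℤ) : Λ) • a = a := by
    intro a
    have h := hkill a
    rw [sub_smul, one_smul, sub_eq_zero] at h
    have : (tL ^ n : Λ) = LaurentPolynomial.T (n : ℤ) := by
      rw [show tL = LaurentPolynomial.T 1 from rfl, LaurentPolynomial.T_pow, mul_one]
    rw [this] at h
    exact h
  have hTneg : ∀ a : A, (LaurentPolynomial.T (-(n : ℤ)) : Λ) • a = a := by
    intro a
    conv_lhs => rw [← hTnat a, ← mul_smul, ← LaurentPolynomial.T_add]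
    rw [neg_add_cancel, LaurentPolynomial.T_zero, one_smul]
  have hTmul : ∀ (q : ℤ) (a : A), (LaurentPolynomial.T ((n : ℤ) * q) : Λ) • a = a := by
    intro q
    induction q using Int.induction_on with
    | zero => intro a; rw [mul_zero, LaurentPolynomial.T_zero, one_smul]
    | succ k ih =>
      intro a
      have he : ((n : ℤ) * (k + 1)) = (n : ℤ) + (n : ℤ) * k := by ring
      rw [he, LaurentPolynomial.T_add, mul_smul, ih a, hTnat a]
    | pred k ih =>
      intro a
      have he : ((n : ℤ) * (-(k : ℤ) - 1)) = (-(n : ℤ)) + (n : ℤ) * (-(k : ℤ)) := by ring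
      rw [he, LaurentPolynomial.T_add, mul_smul, ih a, hTneg a]
  -- reduce every `T m` to a small power of `tL`
  have hTmod : ∀ (m : ℤ) (a : A),
      (LaurentPolynomial.T m : Λ) • a = tL ^ (m % (n : ℤ)).toNat • a := by
    intro m a
    have hm0 : 0 ≤ m % (n : ℤ) := Int.emod_nonneg m (by exact_mod_cast hn0.ne')
    have hdec : m = m % (n : ℤ) + (n : ℤ) * (m / (n : ℤ)) := by
      rw [add_comm]; exact (Int.mul_ediv_add_emod m (n : ℤ)).symm
    have hpow : (tL ^ (m % (n : ℤ)).toNat : Λ) = LaurentPolynomial.T (m % (n : ℤ)) := by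
      rw [show tL = LaurentPolynomial.T 1 from rfl, LaurentPolynomial.T_pow, mul_one,
        Int.toNat_of_nonneg hm0]
    rw [hpow]
    conv_lhs => rw [hdec, LaurentPolynomial.T_add, mul_smul, hTmul (m / (n : ℤ)) a]
  have hmodlt : ∀ m : ℤ, (m % (n : ℤ)).toNat < n := by
    intro m
    have : m % (n : ℤ) < (n : ℤ) := Int.emod_lt_of_pos m (by exact_mod_cast hn0)
    omega
  -- the finite generating set over ℤ
  set G : Set A := Set.image2 (fun (j : Fin n) (x : A) => tL ^ (j : ℕ) • x) Set.univ ↑s with hG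
  have hGfin : G.Finite := Set.Finite.image2 _ (Set.finite_univ) s.finite_toSet
  set S : Submodule ℤ A := Submodule.span ℤ G with hS
  have hTm_mem : ∀ (m : ℤ) (x : A), x ∈ (↑s : Set A) → (LaurentPolynomial.T m : Λ) • x ∈ S := by
    intro m x hx
    rw [hTmod m x]
    exact Submodule.subset_span
      (Set.mem_image2_of_mem (a := (⟨(m % (n : ℤ)).toNat, hmodlt m⟩ : Fin n))
        (Set.mem_univ _) hx)
  have hsmul_gen : ∀ (f : Λ) (x : A), x ∈ (↑s : Set A) → f • x ∈ S := by
    intro f x hx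
    induction f using LaurentPolynomial.induction_on' with
    | add f g hf hg => rw [add_smul]; exact S.add_mem hf hg
    | C_mul_T m z =>
      have hCz : (LaurentPolynomial.C z : Λ) = (z : Λ) := eq_intCast LaurentPolynomial.C z
      rw [mul_smul, hCz, Int.cast_smul_eq_zsmul]
      exact S.smul_mem z (hTm_mem m x hx)
  have hsmul_S : ∀ (f : Λ) (a : A), a ∈ S → f • a ∈ S := by
    intro f a ha
    induction ha using Submodule.span_induction with
    | mem x hxG =>
      obtain ⟨j, -, x0, hx0, rfl⟩ := hxG
      rw [← mul_smul]
      exact hsmul_gen _ _ hx0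
    | zero => rw [smul_zero]; exact S.zero_mem
    | add x y hx hy hfx hfy => rw [smul_add]; exact S.add_mem hfx hfy
    | smul z x hx hfx =>
      rw [← Int.cast_smul_eq_zsmul Λ z x, ← mul_smul, mul_comm, mul_smul,
        Int.cast_smul_eq_zsmul Λ z (f • x)]
      exact S.smul_mem z hfx
  have hStop : S = ⊤ := by
    rw [eq_top_iff]
    intro a ha
    clear ha
    have haΛ : a ∈ Submodule.span Λ (↑s : Set A) := by rw [hs]; trivial
    induction haΛ using Submodule.span_induction with
    | mem x hx => simpa using hsmul_gen 1 x hx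
    | zero => exact S.zero_mem
    | add x y hx hy hfx hfy => exact S.add_mem hfx hfy
    | smul f x hx hfx => exact hsmul_S f x hfx
  haveI hfinZ : Module.Finite ℤ A := ⟨Submodule.fg_def.mpr ⟨G, hGfin, hStop⟩⟩
  -- Nakayama: a nonzero integer annihilates A
  have hle : (⊤ : Submodule ℤ A) ≤ (Ideal.span {(p : ℤ)}) • (⊤ : Submodule ℤ A) := by
    intro a _
    obtain ⟨b, hb⟩ := hpA a
    rw [← hb]
    exact Submodule.smul_mem_smul (Ideal.subset_span rfl) Submodule.mem_top
  obtain ⟨t, ht1, ht0⟩ :=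
    Submodule.exists_sub_one_mem_and_smul_eq_zero_of_fg_of_le_smul
      (Ideal.span {(p : ℤ)}) (⊤ : Submodule ℤ A) hfinZ.fg_top hle
  have htne : t ≠ 0 := by
    intro h
    rw [h, zero_sub, Ideal.mem_span_singleton] at ht1
    have : (p : ℤ) ∣ 1 := (dvd_neg.mp ht1)
    have : p ∣ 1 := by exact_mod_cast this
    exact hp.one_lt.ne' (Nat.dvd_one.mp this)
  have htor : Module.IsTorsion ℤ A := by
    intro a
    exact ⟨⟨t, mem_nonZeroDivisors_of_ne_zero htne⟩, ht0 a trivial⟩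
  exact Module.finite_of_fg_torsion A htor
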